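/- Let p be a prime and f ∈ F_p[[x]] a power series algebraic over F_p(x) (i.e., E(x, f(x)) = 0 for some nonzero E ∈ F_p[x,y]). Then the F_p-vector space spanned by the orbit of f under all finite compositions of the section operators S_0, ..., S_{p−1} is finite-dimensional. -/

import Mathlib

open PowerSeries

/-- Substitution of `x^q` into a formal power series: `(psub q z)(x) = z(x^q)`. -/
noncomputable def psub {R : Type*} [Semiring R] (q : ℕ) (z : PowerSeries R) : PowerSeries R :=
  PowerSeries.mk fun n => if q ∣ n then PowerSeries.coeff (R := R) (n / q) z else 0

/-- The section operator `S_r` : sends `Σ z_n x^n` to `Σ z_{pn+r} x^n`. -/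
noncomputable def sect {R : Type*} [Semiring R] (p r : ℕ) (z : PowerSeries R) : PowerSeries R :=
  PowerSeries.mk fun n => PowerSeries.coeff (R := R) (p * n + r) z

/-- The `x`-degree of a polynomial `E ∈ R[x][y]` (outer variable is `y`). -/
noncomputable def degX {R : Type*} [CommSemiring R] (E : Polynomial (Polynomial R)) : ℕ :=
  E.support.sup fun n => (E.coeff n).natDegree


namespace ChristolAux

section basic
variable {R : Type*} [Semiring R] {p : ℕ}

@[simp] lemma coeff_psub (q n : ℕ) (z : PowerSeries R) :
    PowerSeries.coeff n (psub q z) = if q ∣ n then PowerSeries.coeff (n / q) z else 0 := by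
  simp [psub]

@[simp] lemma coeff_sect (q r n : ℕ) (z : PowerSeries R) :
    PowerSeries.coeff n (sect q r z) = PowerSeries.coeff (q * n + r) z := by
  simp [sect]

lemma sect_add (q r : ℕ) (a b : PowerSeries R) :
    sect q r (a + b) = sect q r a + sect q r b := by
  ext n; simp

lemma sect_zero (q r : ℕ) : sect q r (0 : PowerSeries R) = 0 := by
  ext n; simp

lemma sect_smul (q r : ℕ) (c : R) (a : PowerSeries R) [SMulCommClass R R R]  :
    sect q r (c • a) = c • sect q r a := by
  ext n; simp

lemma psub_add (q : ℕ) (a b : PowerSeries R) :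
    psub q (a + b) = psub q a + psub q b := by
  ext n; simp only [coeff_psub, map_add]; split <;> simp

lemma psub_zero (q : ℕ) : psub q (0 : PowerSeries R) = 0 := by
  ext n; simp only [coeff_psub, map_zero]; split <;> simp

lemma sect_sum {ι : Type*} (q r : ℕ) (s : Finset ι) (g : ι → PowerSeries R) :
    sect q r (∑ i ∈ s, g i) = ∑ i ∈ s, sect q r (g i) := by
  classical
  induction s using Finset.induction with
  | empty => simp [sect_zero]
  | insert _ _ h ih => rw [Finset.sum_insert h, Finset.sum_insert h, sect_add, ih]

lemma psub_sum {ι : Type*} (q : ℕ) (s : Finset ι) (g : ι → PowerSeries R) :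
    psub q (∑ i ∈ s, g i) = ∑ i ∈ s, psub q (g i) := by
  classical
  induction s using Finset.induction with
  | empty => simp [psub_zero]
  | insert _ _ h ih => rw [Finset.sum_insert h, Finset.sum_insert h, psub_add, ih]

/-- key coefficient computation -/
lemma key_coeff (hp0 : 0 < p) (g : ℕ → PowerSeries R) {j : ℕ} (hj : j < p) (n : ℕ) :
    PowerSeries.coeff (p * n + j) (∑ j' ∈ Finset.range p, X ^ j' * psub p (g j')) =
      PowerSeries.coeff n (g j) := by
  rw [map_sum]
  rw [Finset.sum_eq_single_of_mem j (Finset.mem_range.2 hj)]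
  · rw [PowerSeries.coeff_X_pow_mul, coeff_psub, if_pos (dvd_mul_right p n),
      Nat.mul_div_cancel_left _ hp0]
  · intro j' hj'mem hne
    have hj' : j' < p := Finset.mem_range.1 hj'mem
    rw [PowerSeries.coeff_X_pow_mul']
    split
    · rename_i hle
      rw [coeff_psub]
      rw [if_neg]
      rintro ⟨m, hm⟩
      have hm' : p * n + j = p * m + j' := by
        have h1 : p * n + j - j' = p * m := hm
        omega
      have e1 : (p * n + j) % p = j := by rw [Nat.mul_add_mod, Nat.mod_eq_of_lt hj]
      have e2 : (p * m + j') % p = j' := by rw [Nat.mul_add_mod, Nat.mod_eq_of_lt hj']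
      rw [hm'] at e1
      exact hne (e2.symm.trans e1)
    · rfl

/-- decomposition of a power series into its p-sections -/
lemma decomp (hp0 : 0 < p) (z : PowerSeries R) :
    z = ∑ j ∈ Finset.range p, X ^ j * psub p (sect p j z) := by
  ext m
  have h := key_coeff hp0 (fun j => sect p j z) (Nat.mod_lt m hp0) (m / p)
  rw [coeff_sect, Nat.div_add_mod] at h
  exact h.symm

lemma eq_zero_of_sum_eq_zero (hp0 : 0 < p) (g : ℕ → PowerSeries R)
    (h : ∑ j ∈ Finset.range p, X ^ j * psub p (g j) = 0) {j : ℕ} (hj : j < p) :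
    g j = 0 := by
  ext n
  have := congrArg (PowerSeries.coeff (p * n + j)) h
  rw [key_coeff hp0 _ hj n] at this
  simpa using this

/-- the main section identity: `S_r((g∘x^p) · z) = g · S_r(z)` for `r < p`. -/
lemma sect_psub_mul (hp0 : 0 < p) {r : ℕ} (hr : r < p) (g z : PowerSeries R) :
    sect p r (psub p g * z) = g * sect p r z := by
  ext n
  rw [coeff_sect, PowerSeries.coeff_mul, PowerSeries.coeff_mul,
    Finset.Nat.sum_antidiagonal_eq_sum_range_succ_mk,
    Finset.Nat.sum_antidiagonal_eq_sum_range_succ_mk]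
  have hstep : ∀ k ∈ Finset.range (n+1),
      PowerSeries.coeff k g * PowerSeries.coeff (n - k) (sect p r z)
        = PowerSeries.coeff k g * PowerSeries.coeff (p * n + r - p * k) z := by
    intro k hk
    have hk' : k ≤ n := Nat.lt_succ_iff.1 (Finset.mem_range.1 hk)
    rw [coeff_sect]
    congr 2
    have h2 : p * k + (p * (n - k) + r) = p * n + r := by
      rw [← add_assoc, ← Nat.mul_add, Nat.add_sub_cancel' hk']
    rw [← h2, Nat.add_sub_cancel_left]
  rw [Finset.sum_congr rfl hstep]
  have hsub : (Finset.range (n+1)).image (fun k => p * k) ⊆ Finset.range (p * n + r + 1) := by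
    intro a ha
    obtain ⟨k, hk, rfl⟩ := Finset.mem_image.1 ha
    have hk' : k ≤ n := Nat.lt_succ_iff.1 (Finset.mem_range.1 hk)
    exact Finset.mem_range.2 (Nat.lt_succ_of_le (le_add_right (Nat.mul_le_mul_left p hk')))
  rw [← Finset.sum_subset hsub (by
    intro a hamem hnotmem
    have hz : ¬ p ∣ a := by
      rintro ⟨k, rfl⟩
      apply hnotmem
      refine Finset.mem_image.2 ⟨k, Finset.mem_range.2 ?_, rfl⟩
      have h3 := Finset.mem_range.1 hamem
      by_contra hcon
      push_neg at hcon
      have h4 : p * (n + 1) ≤ p * k := Nat.mul_le_mul_left p hcon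
      have h5 : p * n + p ≤ p * k := by rw [Nat.mul_add, Nat.mul_one] at h4; exact h4
      omega
    rw [coeff_psub, if_neg hz, zero_mul])]
  rw [Finset.sum_image (fun a _ b _ h => Nat.eq_of_mul_eq_mul_left hp0 h)]
  apply Finset.sum_congr rfl
  intro k _
  rw [coeff_psub, if_pos (dvd_mul_right p k), Nat.mul_div_cancel_left _ hp0]

end basic

section poly
open Polynomial
variable {R : Type*} [CommSemiring R] {p : ℕ}

/-- the section operator on polynomials -/
noncomputable def sectPoly (q r : ℕ) (Q : Polynomial R) : Polynomial R :=
  ∑ k ∈ Finset.range (Q.natDegree + 1), Polynomial.monomial k (Q.coeff (q * k + r))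

lemma sectPoly_coeff (hp2 : 2 ≤ p) (r : ℕ) (Q : Polynomial R) (k : ℕ) :
    (sectPoly p r Q).coeff k = Q.coeff (p * k + r) := by
  rw [sectPoly, Polynomial.finset_sum_coeff]
  simp only [Polynomial.coeff_monomial]
  rw [Finset.sum_ite_eq' (Finset.range (Q.natDegree + 1)) k (fun k => Q.coeff (p*k+r))]
  split
  · rfl
  · rename_i hk
    rw [Finset.mem_range, Nat.lt_succ_iff] at hk
    push_neg at hk
    rw [eq_comm]
    apply Polynomial.coeff_eq_zero_of_natDegree_lt
    have h1 : k ≤ p * k := Nat.le_mul_of_pos_left k (by omega)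
    omega

lemma sectPoly_coe (hp2 : 2 ≤ p) (r : ℕ) (Q : Polynomial R) :
    ((sectPoly p r Q : Polynomial R) : PowerSeries R) = sect p r (Q : PowerSeries R) := by
  ext n
  rw [Polynomial.coeff_coe, sectPoly_coeff hp2, coeff_sect, Polynomial.coeff_coe]

lemma sectPoly_natDegree_le (hp2 : 2 ≤ p) (r : ℕ) (Q : Polynomial R) {K : ℕ}
    (h : Q.natDegree < p * (K + 1)) : (sectPoly p r Q).natDegree ≤ K := by
  rw [Polynomial.natDegree_le_iff_coeff_eq_zero]
  intro N hN
  rw [sectPoly_coeff hp2]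
  apply Polynomial.coeff_eq_zero_of_natDegree_lt
  have : p * (K + 1) ≤ p * N := Nat.mul_le_mul_left p hN
  omega

end poly

section frob
open Polynomial
variable {p : ℕ} [hp : Fact p.Prime]

instance : CharP (PowerSeries (ZMod p)) p :=
  charP_of_injective_ringHom (PowerSeries.C_injective (R := ZMod p)) p

lemma frobenius_zmod_poly (Q : Polynomial (ZMod p)) : Q ^ p = expand (ZMod p) p Q := by
  have h1 : frobenius (ZMod p) p = RingHom.id (ZMod p) := by
    ext a; exact ZMod.pow_card a
  have := Polynomial.map_frobenius_expand p Q
  rw [h1, Polynomial.map_id] at this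
  exact this.symm

/-- Frobenius on `F_p[[x]]` is substitution of `x^p`. -/
lemma pow_p_eq_psub (z : PowerSeries (ZMod p)) : z ^ p = psub p z := by
  have hp0 : 0 < p := hp.out.pos
  ext m
  set N := m + 1 with hN
  obtain ⟨h, hh⟩ : (PowerSeries.X : PowerSeries (ZMod p)) ^ N ∣ z - ((trunc N z : Polynomial (ZMod p)) : PowerSeries (ZMod p)) := by
    rw [PowerSeries.X_pow_dvd_iff]
    intro k hk
    rw [map_sub, Polynomial.coeff_coe, PowerSeries.coeff_trunc, if_pos hk, sub_self]
  have hz : z = ((trunc N z : Polynomial (ZMod p)) : PowerSeries (ZMod p)) + PowerSeries.X ^ N * h := by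
    rw [← hh]; ring
  have hzp : z ^ p = ((trunc N z : Polynomial (ZMod p)) : PowerSeries (ZMod p)) ^ p + (PowerSeries.X ^ N * h) ^ p := by
    conv_lhs => rw [hz]
    exact add_pow_char ((trunc N z : Polynomial (ZMod p)) : PowerSeries (ZMod p)) (PowerSeries.X ^ N * h) p
  have hvanish : PowerSeries.coeff m ((PowerSeries.X ^ N * h) ^ p) = 0 := by
    have hdvd : (PowerSeries.X : PowerSeries (ZMod p)) ^ (N * p) ∣ (PowerSeries.X ^ N * h) ^ p :=
      ⟨h ^ p, by rw [mul_pow, pow_mul]⟩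
    exact PowerSeries.X_pow_dvd_iff.1 hdvd m
      (lt_of_lt_of_le (Nat.lt_succ_self m) (Nat.le_mul_of_pos_right N hp0))
  have hT : ((trunc N z : Polynomial (ZMod p)) : PowerSeries (ZMod p)) ^ p
      = ((expand (ZMod p) p (trunc N z) : Polynomial (ZMod p)) : PowerSeries (ZMod p)) := by
    rw [← Polynomial.coe_pow, frobenius_zmod_poly]
  rw [hzp, map_add, hvanish, add_zero, hT, Polynomial.coeff_coe,
    Polynomial.coeff_expand hp0, coeff_psub]
  split
  · rw [PowerSeries.coeff_trunc, if_pos (lt_of_le_of_lt (Nat.div_le_self m p) (Nat.lt_succ_self m))]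
  · rfl

lemma psub_mul (a b : PowerSeries (ZMod p)) : psub p (a * b) = psub p a * psub p b := by
  rw [← pow_p_eq_psub, ← pow_p_eq_psub, ← pow_p_eq_psub, mul_pow]

end frob

section improve
variable {p : ℕ} [hp : Fact p.Prime]

lemma sect_neg {R : Type*} [Ring R] (q r : ℕ) (z : PowerSeries R) :
    sect q r (-z) = - sect q r z := by
  ext n; simp

lemma improve (f : PowerSeries (ZMod p)) :
    ∀ i0 T : ℕ, ∀ B : ℕ → Polynomial (ZMod p), i0 ≤ T → B i0 ≠ 0 →
      (∑ i ∈ Finset.range (T+1),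
        ((B i : Polynomial (ZMod p)) : PowerSeries (ZMod p)) * f ^ (p ^ i) = 0) →
      ∃ (T' : ℕ) (A : ℕ → Polynomial (ZMod p)), A 0 ≠ 0 ∧
        ∑ i ∈ Finset.range (T'+1),
          ((A i : Polynomial (ZMod p)) : PowerSeries (ZMod p)) * f ^ (p ^ i) = 0 := by
  intro i0
  induction i0 using Nat.strong_induction_on with
  | _ i0 IH =>
  intro T B hi0T hBi0 hrel
  by_cases hB0 : B 0 = 0
  · have hi0pos : 0 < i0 := Nat.pos_of_ne_zero (fun h => hBi0 (h ▸ hB0))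
    have hp0 : 0 < p := hp.out.pos
    have hp2 : 2 ≤ p := hp.out.two_le
    have hTpos : 0 < T := lt_of_lt_of_le hi0pos hi0T
    have hpow : ∀ i : ℕ, f ^ (p ^ (i+1)) = psub p (f ^ (p ^ i)) := by
      intro i; rw [pow_succ, pow_mul, pow_p_eq_psub]
    have hrel1 : ∑ i ∈ Finset.range T,
        ((B (i+1) : Polynomial (ZMod p)) : PowerSeries (ZMod p)) * f ^ (p ^ (i+1)) = 0 := by
      rw [Finset.sum_range_succ'] at hrel
      simpa [hB0] using hrel
    have hrel2 : ∀ j, j < p → ∑ i ∈ Finset.range T,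
        sect p j ((B (i+1) : Polynomial (ZMod p)) : PowerSeries (ZMod p)) * f ^ (p ^ i) = 0 := by
      intro j hj
      refine eq_zero_of_sum_eq_zero hp0 (fun j => ∑ i ∈ Finset.range T,
        sect p j ((B (i+1) : Polynomial (ZMod p)) : PowerSeries (ZMod p)) * f ^ (p ^ i)) ?_ hj
      rw [← hrel1]
      symm
      calc ∑ i ∈ Finset.range T,
            ((B (i+1) : Polynomial (ZMod p)) : PowerSeries (ZMod p)) * f ^ (p ^ (i+1))
          = ∑ i ∈ Finset.range T, ∑ j' ∈ Finset.range p, PowerSeries.X ^ j' *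
              psub p (sect p j' ((B (i+1) : Polynomial (ZMod p)) : PowerSeries (ZMod p))
                * f ^ (p ^ i)) := by
            refine Finset.sum_congr rfl fun i _ => ?_
            conv_lhs => rw [decomp hp0 ((B (i+1) : Polynomial (ZMod p)) : PowerSeries (ZMod p)),
              hpow i]
            rw [Finset.sum_mul]
            refine Finset.sum_congr rfl fun j' _ => ?_
            rw [mul_assoc, ← psub_mul]
        _ = ∑ j' ∈ Finset.range p, PowerSeries.X ^ j' *
              psub p (∑ i ∈ Finset.range T,
                sect p j' ((B (i+1) : Polynomial (ZMod p)) : PowerSeries (ZMod p))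
                  * f ^ (p ^ i)) := by
            rw [Finset.sum_comm]
            refine Finset.sum_congr rfl fun j' _ => ?_
            rw [psub_sum, Finset.mul_sum]
    obtain ⟨m, hm⟩ : ∃ m, (B i0).coeff m ≠ 0 := by
      by_contra hcon
      push_neg at hcon
      exact hBi0 (Polynomial.ext fun m => by rw [hcon m, Polynomial.coeff_zero])
    set j := m % p with hjdef
    have hj : j < p := Nat.mod_lt m hp0
    have hnew : ∑ i ∈ Finset.range T,
        ((sectPoly p j (B (i+1)) : Polynomial (ZMod p)) : PowerSeries (ZMod p)) * f ^ (p ^ i)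
          = 0 := by
      refine Eq.trans (Finset.sum_congr rfl fun i _ => ?_) (hrel2 j hj)
      rw [sectPoly_coe hp2]
    have hBnew : sectPoly p j (B i0) ≠ 0 := by
      intro h
      have h2 := sectPoly_coeff hp2 j (B i0) (m / p)
      rw [h, Polynomial.coeff_zero, hjdef, Nat.div_add_mod] at h2
      exact hm h2.symm
    refine IH (i0-1) (by omega) (T-1) (fun i => sectPoly p j (B (i+1))) (by omega) ?_ ?_
    · have h3 : i0 - 1 + 1 = i0 := by omega
      show sectPoly p j (B (i0 - 1 + 1)) ≠ 0
      rw [h3]; exact hBnew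
    · rw [show T - 1 + 1 = T by omega]
      exact hnew
  · exact ⟨T, B, hB0, hrel⟩

end improve


section relation
open IntermediateField
variable {p : ℕ} [hp : Fact p.Prime]

local notation "RF" => RatFunc (ZMod p)

set_option synthInstance.maxHeartbeats 1000000 in
set_option maxHeartbeats 1000000 in
lemma exists_dep (f : PowerSeries (ZMod p))
    (halg : ∃ E : Polynomial (Polynomial (ZMod p)), E ≠ 0 ∧
      Polynomial.eval₂ ((Polynomial.coeToPowerSeries.ringHom :
        Polynomial (ZMod p) →+* PowerSeries (ZMod p))) f E = 0) :
    ∃ (T : ℕ) (B : ℕ → Polynomial (ZMod p)) (i0 : ℕ), i0 ≤ T ∧ B i0 ≠ 0 ∧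
      ∑ i ∈ Finset.range (T+1),
        ((B i : Polynomial (ZMod p)) : PowerSeries (ZMod p)) * f ^ (p ^ i) = 0 := by
  classical
  obtain ⟨E, hE0, hEf⟩ := halg
  letI K := FractionRing (PowerSeries (ZMod p))
  set ψ : PowerSeries (ZMod p) →+* K := algebraMap (PowerSeries (ZMod p)) K with hψ
  set g0 : Polynomial (ZMod p) →+* K := ψ.comp Polynomial.coeToPowerSeries.ringHom with hg0
  have hcoeinj : Function.Injective (Polynomial.coeToPowerSeries.ringHom :
      Polynomial (ZMod p) →+* PowerSeries (ZMod p)) := by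
    intro a b h
    simpa [Polynomial.coeToPowerSeries.ringHom_apply, Polynomial.coe_inj] using h
  have hψinj : Function.Injective ψ := IsFractionRing.injective (PowerSeries (ZMod p)) K
  have hg0inj : Function.Injective g0 := hψinj.comp hcoeinj
  letI : Algebra RF K := (IsFractionRing.lift (A := Polynomial (ZMod p)) hg0inj).toAlgebra
  have halgmap : ∀ P : Polynomial (ZMod p),
      algebraMap RF K (algebraMap (Polynomial (ZMod p)) RF P) = g0 P := by
    intro P
    exact IsFractionRing.lift_algebraMap hg0inj P
  set fK : K := ψ f with hfK
  -- fK is algebraic over RF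
  have hIsAlg : IsAlgebraic RF fK := by
    refine ⟨E.map (algebraMap (Polynomial (ZMod p)) RF), ?_, ?_⟩
    · exact (Polynomial.map_ne_zero_iff (IsFractionRing.injective _ _)).2 hE0
    · rw [Polynomial.aeval_def, Polynomial.eval₂_map]
      have hcomp : (algebraMap RF K).comp (algebraMap (Polynomial (ZMod p)) RF) = g0 :=
        RingHom.ext halgmap
      rw [hcomp, hg0]
      rw [← Polynomial.hom_eval₂]
      rw [hEf, map_zero]
  have hint : IsIntegral RF fK := hIsAlg.isIntegral
  letI : FiniteDimensional RF RF⟮fK⟯ := IntermediateField.adjoin.finiteDimensional hint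
  set n := Module.finrank RF RF⟮fK⟯ with hn
  set v : Fin (n+1) → RF⟮fK⟯ := fun i =>
    ⟨fK ^ (p ^ (i : ℕ)), pow_mem (IntermediateField.mem_adjoin_simple_self RF fK) _⟩ with hv
  have hnli : ¬ LinearIndependent RF v := by
    intro hli
    have := hli.fintype_card_le_finrank
    rw [Fintype.card_fin] at this
    omega
  obtain ⟨c, hcsum, i1, hci1⟩ := Fintype.not_linearIndependent_iff.1 hnli
  -- push the relation down to K
  have hsumK : ∑ i : Fin (n+1), c i • fK ^ (p ^ (i : ℕ)) = 0 := by
    have := congrArg (Subtype.val) hcsum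
    push_cast at this
    convert this using 2
  -- clear denominators
  obtain ⟨b, hb⟩ := IsLocalization.exist_integer_multiples
    (nonZeroDivisors (Polynomial (ZMod p))) Finset.univ c
  choose B hB using fun i => hb i (Finset.mem_univ i)
  have hbF : algebraMap (Polynomial (ZMod p)) RF (b : Polynomial (ZMod p)) ≠ 0 := by
    have hbne : (b : Polynomial (ZMod p)) ≠ 0 := nonZeroDivisors.ne_zero b.prop
    exact fun h => hbne (IsFractionRing.injective _ _ (by rw [h, map_zero]))
  have hrelK : ∑ i : Fin (n+1), g0 (B i) * fK ^ (p ^ (i : ℕ)) = 0 := by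
    have : ∀ i : Fin (n+1), g0 (B i)
        = algebraMap RF K (algebraMap (Polynomial (ZMod p)) RF (b : Polynomial (ZMod p))) *
          algebraMap RF K (c i) := by
      intro i
      rw [← halgmap (B i), hB i, Algebra.smul_def, map_mul]
    calc ∑ i : Fin (n+1), g0 (B i) * fK ^ (p ^ (i : ℕ))
        = algebraMap RF K (algebraMap (Polynomial (ZMod p)) RF (b : Polynomial (ZMod p))) *
          ∑ i : Fin (n+1), c i • fK ^ (p ^ (i : ℕ)) := by
          rw [Finset.mul_sum]
          refine Finset.sum_congr rfl fun i _ => ?_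
          rw [this i, Algebra.smul_def, mul_assoc]
      _ = 0 := by rw [hsumK, mul_zero]
  -- pull back to power series
  have hrelPS : ∑ i : Fin (n+1), ((B i : Polynomial (ZMod p)) : PowerSeries (ZMod p)) * f ^ (p ^ (i : ℕ)) = 0 := by
    apply hψinj
    rw [map_sum, map_zero]
    refine Eq.trans (Finset.sum_congr rfl fun i _ => ?_) hrelK
    rw [map_mul, map_pow]
    rfl
  have hBi1 : B i1 ≠ 0 := by
    intro h
    apply hci1
    have := hB i1
    rw [h, map_zero, Algebra.smul_def] at this
    rcases mul_eq_zero.1 this.symm with h' | h'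
    · exact absurd h' hbF
    · exact h'
  refine ⟨n, fun i => if h : i < n + 1 then B ⟨i, h⟩ else 0, (i1 : ℕ),
    Nat.lt_succ_iff.1 i1.isLt, ?_, ?_⟩
  · show (if h : (i1:ℕ) < n + 1 then B ⟨(i1:ℕ), h⟩ else 0) ≠ 0
    rw [dif_pos i1.isLt]
    simpa [Fin.eta] using hBi1
  · rw [Finset.sum_range fun i => _]
    refine Eq.trans (Finset.sum_congr rfl fun i _ => ?_) hrelPS
    show ((if h : (i:ℕ) < n + 1 then B ⟨(i:ℕ), h⟩ else 0 : Polynomial (ZMod p)) :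
      PowerSeries (ZMod p)) * f ^ p ^ (i:ℕ) = _
    rw [dif_pos i.isLt]
end relation

end ChristolAux




open ChristolAux in
/-- Forward direction of Christol's theorem via `p`-kernels: if `f ∈ F_p[[x]]` is algebraic
over `F_p(x)` (it is a root of some nonzero `E ∈ F_p[x,y]`), then the `F_p`-span of the orbit
of `f` under all finite compositions of the section operators `S_0, …, S_{p−1}` is
finite-dimensional. -/
theorem kernel_span_finiteDimensional (p : ℕ) [Fact p.Prime]
    (f : PowerSeries (ZMod p))
    (halg : ∃ E : Polynomial (Polynomial (ZMod p)), E ≠ 0 ∧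
      Polynomial.eval₂ ((Polynomial.coeToPowerSeries.ringHom : Polynomial (ZMod p) →+* PowerSeries (ZMod p))) f E = 0) :
    FiniteDimensional (ZMod p)
      (Submodule.span (ZMod p)
        {g : PowerSeries (ZMod p) | ∃ L : List ℕ, (∀ r ∈ L, r < p) ∧
          g = L.foldl (fun z r => sect p r z) f}) := by
  classical
  have hp0 : 0 < p := (‹Fact p.Prime›.out).pos
  have hp2 : 2 ≤ p := (‹Fact p.Prime›.out).two_le
  obtain ⟨e, hpe⟩ : ∃ e : ℕ, p = e + 2 := ⟨p - 2, by omega⟩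
  obtain ⟨T0, B, i0, hi0, hBne, hrel0⟩ := exists_dep f halg
  obtain ⟨T, A, hA0, hrel⟩ := improve f i0 T0 B hi0 hBne hrel0
  set a := (A 0).natDegree with ha
  set mA := Finset.sup (Finset.range (T+1)) (fun i => (A i).natDegree) with hmA
  set D := a + mA with hD
  set A0 : PowerSeries (ZMod p) := ((A 0 : Polynomial (ZMod p)) : PowerSeries (ZMod p)) with hA0def
  have hA0ne : A0 ≠ 0 := by
    intro h
    apply hA0
    rw [← Polynomial.coe_inj, Polynomial.coe_zero]
    exact h
  set gen : Finset (PowerSeries (ZMod p)) :=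
    ((Finset.range (T+1)) ×ˢ (Finset.range (D+1))).image
      (fun ij => PowerSeries.X ^ ij.2 * f ^ (p ^ ij.1)) with hgen
  set V := Submodule.span (ZMod p) (gen : Set (PowerSeries (ZMod p))) with hV
  haveI hVfd : FiniteDimensional (ZMod p) V :=
    FiniteDimensional.span_of_finite _ (gen.finite_toSet)
  set W := V.comap (LinearMap.mulLeft (ZMod p) A0) with hW
  have hmemW : ∀ z : PowerSeries (ZMod p), z ∈ W ↔ A0 * z ∈ V := by
    intro z
    rw [hW, Submodule.mem_comap, LinearMap.mulLeft_apply]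
  -- membership helper
  have hmemV : ∀ (P : Polynomial (ZMod p)), P.natDegree ≤ D → ∀ i, i ≤ T →
      ((P : Polynomial (ZMod p)) : PowerSeries (ZMod p)) * f ^ (p ^ i) ∈ V := by
    intro P hP i hi
    have hcoe : ((P : Polynomial (ZMod p)) : PowerSeries (ZMod p))
        = ∑ j ∈ Finset.range (D+1), (P.coeff j) • (PowerSeries.X ^ j : PowerSeries (ZMod p)) := by
      conv_lhs => rw [Polynomial.as_sum_range' P (D+1) (Nat.lt_succ_of_le hP)]
      rw [← Polynomial.coeToPowerSeries.ringHom_apply, map_sum]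
      refine Finset.sum_congr rfl fun j _ => ?_
      rw [Polynomial.coeToPowerSeries.ringHom_apply, Polynomial.coe_monomial,
        PowerSeries.X_pow_eq, ← map_smul, smul_eq_mul, mul_one]
    rw [hcoe, Finset.sum_mul]
    apply Submodule.sum_mem
    intro j hj
    rw [smul_mul_assoc]
    apply Submodule.smul_mem
    apply Submodule.subset_span
    rw [hgen]
    exact Finset.mem_coe.2 (Finset.mem_image.2 ⟨(i, j),
      Finset.mem_product.2 ⟨Finset.mem_range.2 (Nat.lt_succ_of_le hi), hj⟩, rfl⟩)
  have hma : ∀ i, i ≤ T → (A i).natDegree ≤ mA := by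
    intro i hi
    exact Finset.le_sup (f := fun i => (A i).natDegree)
      (Finset.mem_range.2 (Nat.lt_succ_of_le hi))
  have haD : a ≤ D := Nat.le_add_right _ _
  have hmaD : mA ≤ D := Nat.le_add_left _ _
  -- relation split
  have hsplit : A0 * f = - ∑ i ∈ Finset.range T,
      ((A (i+1) : Polynomial (ZMod p)) : PowerSeries (ZMod p)) * f ^ (p ^ (i+1)) := by
    rw [Finset.sum_range_succ'] at hrel
    rw [pow_zero, pow_one] at hrel
    exact eq_neg_of_add_eq_zero_right hrel
  -- base case : f ∈ W
  have hfW : f ∈ W := by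
    rw [hmemW, hsplit]
    apply Submodule.neg_mem
    apply Submodule.sum_mem
    intro i hi
    exact hmemV (A (i+1)) (le_trans (hma (i+1) (Finset.mem_range.1 hi)) hmaD) (i+1)
      (Finset.mem_range.1 hi)
  -- closure under sections
  have hpow : ∀ i : ℕ, f ^ (p ^ (i+1)) = psub p (f ^ (p ^ i)) := by
    intro i; rw [pow_succ, pow_mul, pow_p_eq_psub]
  have hsectW : ∀ r, r < p → ∀ z, z ∈ W → sect p r z ∈ W := by
    intro r hr z hz
    rw [hmemW] at hz ⊢
    have hkey : A0 * sect p r z = sect p r (A0 ^ (p-1) * (A0 * z)) := by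
      rw [← mul_assoc, ← pow_succ, show p - 1 + 1 = p by omega, pow_p_eq_psub,
        sect_psub_mul hp0 hr]
    rw [hkey]
    -- show : ∀ v ∈ V, sect p r (A0^(p-1) * v) ∈ V
    have main : ∀ v, v ∈ V → sect p r (A0 ^ (p-1) * v) ∈ V := by
      intro v hv
      induction hv using Submodule.span_induction with
      | zero =>
        rw [mul_zero, sect_zero]; exact Submodule.zero_mem V
      | add x y hx hy ihx ihy =>
        rw [mul_add, sect_add]; exact Submodule.add_mem V ihx ihy
      | smul c x hx ihx =>
        rw [mul_smul_comm, sect_smul]; exact Submodule.smul_mem V c ihx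
      | mem x hx =>
        rw [hgen] at hx
        obtain ⟨ij, hijmem, rfl⟩ := Finset.mem_image.1 (Finset.mem_coe.1 hx)
        obtain ⟨hi1, hj1⟩ := Finset.mem_product.1 hijmem
        obtain ⟨i, j⟩ := ij
        simp only at hi1 hj1 ⊢
        rw [Finset.mem_range, Nat.lt_succ_iff] at hi1 hj1
        match i, hi1 with
        | 0, _ =>
          -- use the relation
          have hsplit2 : A0 ^ (p-1) * (PowerSeries.X ^ j * f ^ (p ^ 0)) =
              - ∑ i' ∈ Finset.range T,
                psub p (f ^ (p ^ i')) *
                  ((Polynomial.X ^ j * (A 0) ^ (p-2) * A (i'+1) : Polynomial (ZMod p)) :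
                    PowerSeries (ZMod p)) := by
            rw [pow_zero, pow_one]
            have h1 : A0 ^ (p-1) * (PowerSeries.X ^ j * f)
                = PowerSeries.X ^ j * A0 ^ (p-2) * (A0 * f) := by
              rw [show p - 1 = (p - 2) + 1 by omega, pow_succ]
              ring
            rw [h1, hsplit, mul_neg, Finset.mul_sum]
            congr 1
            refine Finset.sum_congr rfl fun i' _ => ?_
            rw [hpow i', Polynomial.coe_mul, Polynomial.coe_mul, Polynomial.coe_pow,
              Polynomial.coe_pow, Polynomial.coe_X, ← hA0def]
            ring
          rw [hsplit2, sect_neg, sect_sum]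
          apply Submodule.neg_mem
          apply Submodule.sum_mem
          intro i' hi'
          rw [sect_psub_mul hp0 hr, ← sectPoly_coe hp2, mul_comm]
          have hlt : (Polynomial.X ^ j * (A 0) ^ (p-2) * A (i'+1) : Polynomial (ZMod p)).natDegree
              < p * (D + 1) := by
            have h1 : (Polynomial.X ^ j * (A 0) ^ (p-2) * A (i'+1) :
                Polynomial (ZMod p)).natDegree ≤ (j + (p-2) * a) + mA :=
              le_trans Polynomial.natDegree_mul_le (add_le_add
                (le_trans Polynomial.natDegree_mul_le (add_le_add
                  (Polynomial.natDegree_X_pow_le j) Polynomial.natDegree_pow_le))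
                (hma (i'+1) (Finset.mem_range.1 hi')))
            have h2 : (p-2) * a ≤ (p-2) * D := Nat.mul_le_mul_left _ haD
            have h3 : (p-2) * D + D = (p-1) * D := by
              rw [show p - 1 = (p-2) + 1 by omega, Nat.succ_mul]
            have h4 : (p-1) * D + D = p * D := by
              have h6 := Nat.sub_one_mul p D
              have h7 : D ≤ p * D := Nat.le_mul_of_pos_left D hp0
              omega
            have h5 : p * (D + 1) = p * D + p := by ring
            linarith
          exact hmemV _ (sectPoly_natDegree_le hp2 r _ hlt) i'
            (le_of_lt (Finset.mem_range.1 hi'))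
        | (i'+1), hi1 =>
          have heq : A0 ^ (p-1) * (PowerSeries.X ^ j * f ^ (p ^ (i'+1)))
              = psub p (f ^ (p ^ i')) *
                ((Polynomial.X ^ j * (A 0) ^ (p-1) : Polynomial (ZMod p)) :
                  PowerSeries (ZMod p)) := by
            rw [hpow i', Polynomial.coe_mul, Polynomial.coe_pow, Polynomial.coe_pow,
              Polynomial.coe_X, ← hA0def]
            ring
          rw [heq, sect_psub_mul hp0 hr, ← sectPoly_coe hp2, mul_comm]
          have hlt : (Polynomial.X ^ j * (A 0) ^ (p-1) : Polynomial (ZMod p)).natDegree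
              < p * (D + 1) := by
            have h1 : (Polynomial.X ^ j * (A 0) ^ (p-1) :
                Polynomial (ZMod p)).natDegree ≤ j + (p-1) * a :=
              le_trans Polynomial.natDegree_mul_le (add_le_add
                (Polynomial.natDegree_X_pow_le j) Polynomial.natDegree_pow_le)
            have h2 : (p-1) * a ≤ (p-1) * D := Nat.mul_le_mul_left _ haD
            have h4 : (p-1) * D + D = p * D := by
              have h6 := Nat.sub_one_mul p D
              have h7 : D ≤ p * D := Nat.le_mul_of_pos_left D hp0
              omega
            have h5 : p * (D + 1) = p * D + p := by ring
            linarith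
          exact hmemV _ (sectPoly_natDegree_le hp2 r _ hlt) i' (by omega)
    exact main _ hz
  -- conclude
  set eW : W →ₗ[ZMod p] V :=
    (LinearMap.mulLeft (ZMod p) A0).restrict (p := W) (q := V) (fun x hx => hx) with heW
  have heWinj : Function.Injective eW := by
    intro x y hxy
    have h1 : A0 * (x : PowerSeries (ZMod p)) = A0 * (y : PowerSeries (ZMod p)) := by
      have := congrArg Subtype.val hxy
      simpa [heW, LinearMap.restrict_apply, LinearMap.mulLeft_apply] using this
    exact Subtype.ext (mul_left_cancel₀ hA0ne h1)
  haveI hWfd : FiniteDimensional (ZMod p) W := FiniteDimensional.of_injective eW heWinj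
  apply Submodule.finiteDimensional_of_le (S₂ := W)
  rw [Submodule.span_le]
  rintro g ⟨L, hL, rfl⟩
  have haux : ∀ (L : List ℕ) (h : PowerSeries (ZMod p)), (∀ r ∈ L, r < p) → h ∈ W →
      L.foldl (fun z r => sect p r z) h ∈ W := by
    intro L
    induction L with
    | nil => intro h _ hh; exact hh
    | cons rr L ih =>
      intro h hL hh
      exact ih _ (fun r hr => hL r (List.mem_cons_of_mem _ hr))
        (hsectW rr (hL rr (List.mem_cons_self)) h hh)
  exact haux L f hL hfW
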